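/- Let α ∈ (0,2). Then for every k ∈ ℝ, the function ξ ↦ (2 − 2cos(kξ)) ξ^{−(1+α)} is Lebesgue integrable on (0,∞) and c_{1,α} ∫_0^∞ (2 − 2cos(kξ)) ξ^{−(1+α)} dξ = |k|^α. -/

import Mathlib

open MeasureTheory Set

open Real Filter

lemma lapAux {t : ℝ} (ht : 0 < t) :
    IntegrableOn (fun ξ : ℝ => (1 - Real.cos ξ) * Real.exp (-(t * ξ))) (Ioi 0) volume ∧
    ∫ ξ in Ioi (0:ℝ), (1 - Real.cos ξ) * Real.exp (-(t * ξ)) = 1 / (t * (1 + t ^ 2)) := by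
  have ht2 : (0:ℝ) < 1 + t ^ 2 := by positivity
  set g : ℝ → ℝ := fun ξ =>
    -Real.exp (-(t * ξ)) / t - Real.exp (-(t * ξ)) * (Real.sin ξ - t * Real.cos ξ) / (1 + t ^ 2)
    with hg
  have hE : ∀ ξ : ℝ, HasDerivAt (fun x => Real.exp (-(t * x))) (-t * Real.exp (-(t * ξ))) ξ := by
    intro ξ
    have := (Real.hasDerivAt_exp (-(t * ξ))).comp ξ (((hasDerivAt_id ξ).const_mul t).neg)
    exact this.congr_deriv (by ring)
  have hderiv : ∀ ξ : ℝ, HasDerivAt g ((1 - Real.cos ξ) * Real.exp (-(t * ξ))) ξ := by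
    intro ξ
    have h1 : HasDerivAt (fun x => -Real.exp (-(t * x)) / t)
        (-(-t * Real.exp (-(t * ξ))) / t) ξ := ((hE ξ).neg).div_const t
    have h2 : HasDerivAt (fun x => Real.exp (-(t * x)) * (Real.sin x - t * Real.cos x))
        (-t * Real.exp (-(t * ξ)) * (Real.sin ξ - t * Real.cos ξ)
          + Real.exp (-(t * ξ)) * (Real.cos ξ - t * -Real.sin ξ)) ξ :=
      (hE ξ).mul ((Real.hasDerivAt_sin ξ).sub ((Real.hasDerivAt_cos ξ).const_mul t))
    have := h1.sub (h2.div_const (1 + t ^ 2))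
    refine this.congr_deriv ?_
    field_simp
    ring
  have hnonneg : ∀ ξ ∈ Ioi (0:ℝ), 0 ≤ (1 - Real.cos ξ) * Real.exp (-(t * ξ)) := by
    intro ξ _
    have := Real.cos_le_one ξ
    have := Real.exp_nonneg (-(t * ξ))
    nlinarith
  have hlim : Tendsto g atTop (nhds 0) := by
    have hE0 : Tendsto (fun ξ : ℝ => Real.exp (-(t * ξ))) atTop (nhds 0) := by
      have h0 : Tendsto (fun ξ : ℝ => t * ξ) atTop atTop := tendsto_id.const_mul_atTop ht
      exact Real.tendsto_exp_neg_atTop_nhds_zero.comp h0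
    have h1 : Tendsto (fun ξ : ℝ => -Real.exp (-(t * ξ)) / t) atTop (nhds 0) := by
      simpa using (hE0.neg.div_const t)
    have h2 : Tendsto
        (fun ξ : ℝ => Real.exp (-(t * ξ)) * (Real.sin ξ - t * Real.cos ξ) / (1 + t ^ 2))
        atTop (nhds 0) := by
      have hb : Tendsto (fun ξ : ℝ => Real.exp (-(t * ξ)) * (Real.sin ξ - t * Real.cos ξ))
          atTop (nhds 0) := by
        refine squeeze_zero_norm (a := fun ξ : ℝ => (1 + t) * Real.exp (-(t * ξ))) ?_ ?_
        · intro ξ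
          rw [norm_mul]
          rw [Real.norm_eq_abs, Real.norm_eq_abs, Real.abs_exp]
          have h3 : |Real.sin ξ - t * Real.cos ξ| ≤ 1 + t := by
            have := abs_sub (Real.sin ξ) (t * Real.cos ξ)
            have h4 : |Real.sin ξ| ≤ 1 := Real.abs_sin_le_one ξ
            have h5 : |t * Real.cos ξ| ≤ t := by
              rw [abs_mul, abs_of_pos ht]
              nlinarith [Real.abs_cos_le_one ξ, ht]
            calc |Real.sin ξ - t * Real.cos ξ| ≤ |Real.sin ξ| + |t * Real.cos ξ| :=
                  abs_sub _ _
              _ ≤ 1 + t := add_le_add h4 h5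
          have := Real.exp_nonneg (-(t * ξ))
          calc Real.exp (-(t * ξ)) * |Real.sin ξ - t * Real.cos ξ|
              ≤ Real.exp (-(t * ξ)) * (1 + t) := by nlinarith
            _ = (1 + t) * Real.exp (-(t * ξ)) := by ring
        · simpa using hE0.const_mul (1 + t)
      simpa using hb.div_const (1 + t ^ 2)
    have := h1.sub h2
    simpa [hg] using this
  constructor
  · exact integrableOn_Ioi_deriv_of_nonneg' (fun x _ => hderiv x) hnonneg hlim
  · have := integral_Ioi_of_hasDerivAt_of_nonneg' (fun x _ => hderiv x) hnonneg hlim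
    rw [this, hg]
    simp only [mul_zero, neg_zero, Real.exp_zero, Real.sin_zero, Real.cos_zero]
    field_simp
    ring


-- ∫_0^∞ exp(-(r x)) dx = 1/r
lemma expInt {r : ℝ} (hr : 0 < r) : ∫ x in Ioi (0:ℝ), Real.exp (-(r * x)) = 1 / r := by
  have := Real.integral_rpow_mul_exp_neg_mul_Ioi (by norm_num : (0:ℝ) < 1) hr
  simpa [Real.rpow_one, Real.Gamma_one] using this

lemma gammaScaledInt {a r : ℝ} (ha : 0 < a) (hr : 0 < r) :
    ∫ t in Ioi (0:ℝ), t ^ (a - 1) * Real.exp (-(r * t)) = (1 / r) ^ a * Real.Gamma a :=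
  Real.integral_rpow_mul_exp_neg_mul_Ioi ha hr

lemma gammaScaledIntegrable {a r : ℝ} (ha : 0 < a) (hr : 0 < r) :
    IntegrableOn (fun t : ℝ => t ^ (a - 1) * Real.exp (-(r * t))) (Ioi 0) volume := by
  have h := integrableOn_rpow_mul_exp_neg_mul_rpow (s := a - 1) (p := 1) (b := r)
    (by linarith) one_pos hr
  refine h.congr_fun (fun x hx => ?_) measurableSet_Ioi
  simp only [Real.rpow_one, neg_mul]

lemma betaAux {s : ℝ} (hs0 : 0 < s) (hs1 : s < 1) :
    IntegrableOn (fun u : ℝ => u ^ (s - 1) / (1 + u)) (Ioi 0) volume ∧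
    ∫ u in Ioi (0:ℝ), u ^ (s - 1) / (1 + u) = Real.Gamma s * Real.Gamma (1 - s) := by
  set μ := volume.restrict (Ioi (0:ℝ)) with hμ
  set f : ℝ → ℝ → ℝ := fun u x => u ^ (s - 1) * Real.exp (-((1 + u) * x)) with hf
  have hmeas : AEStronglyMeasurable (Function.uncurry f) (μ.prod μ) := by
    apply Measurable.aestronglyMeasurable
    fun_prop
  -- slice integrability in u for fixed x > 0
  have hslice : ∀ x : ℝ, 0 < x → IntegrableOn (fun u => f u x) (Ioi 0) volume := by
    intro x hx
    have h1 : IntegrableOn (fun u : ℝ => u ^ (s - 1) * Real.exp (-(x * u))) (Ioi 0) volume :=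
      gammaScaledIntegrable hs0 hx
    have h2 : IntegrableOn (fun u : ℝ => Real.exp (-x) * (u ^ (s - 1) * Real.exp (-(x * u))))
        (Ioi 0) volume := h1.const_mul _
    refine h2.congr_fun (fun u hu => ?_) measurableSet_Ioi
    rw [hf]
    simp only
    rw [show Real.exp (-((1 + u) * x)) = Real.exp (-x) * Real.exp (-(x * u)) by
      rw [← Real.exp_add]; congr 1; ring]
    ring
  -- value of slice integral in u for fixed x > 0
  have hsliceval : ∀ x : ℝ, 0 < x →
      ∫ u in Ioi (0:ℝ), f u x = Real.Gamma s * (x ^ ((1 - s) - 1) * Real.exp (-(1 * x))) := by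
    intro x hx
    have h1 : ∫ u in Ioi (0:ℝ), f u x
        = Real.exp (-x) * ∫ u in Ioi (0:ℝ), u ^ (s - 1) * Real.exp (-(x * u)) := by
      rw [← integral_const_mul]
      refine setIntegral_congr_fun measurableSet_Ioi (fun u hu => ?_)
      rw [hf]; simp only
      rw [show Real.exp (-((1 + u) * x)) = Real.exp (-x) * Real.exp (-(x * u)) by
        rw [← Real.exp_add]; congr 1; ring]
      ring
    rw [h1, gammaScaledInt hs0 hx, one_div, ← Real.rpow_neg_one x,
      ← Real.rpow_mul hx.le]
    rw [show (-1:ℝ) * s = -s by ring, show ((1:ℝ) - s) - 1 = -s by ring, one_mul]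
    ring
  have hae : ∀ᵐ x ∂μ, 0 < x := self_mem_ae_restrict measurableSet_Ioi
  have h1 : ∀ᵐ x ∂μ, Integrable (fun u => f u x) μ := by
    filter_upwards [hae] with x hx
    exact hslice x hx
  have h2 : Integrable (fun x => ∫ u, ‖f u x‖ ∂μ) μ := by
    have hg : IntegrableOn
        (fun x : ℝ => Real.Gamma s * (x ^ ((1 - s) - 1) * Real.exp (-(1 * x))))
        (Ioi 0) volume := (gammaScaledIntegrable (by linarith) one_pos).const_mul _
    refine hg.congr ?_
    filter_upwards [hae] with x hx
    rw [← hsliceval x hx]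
    refine (integral_congr_ae ?_).symm
    filter_upwards [hae] with u hu
    rw [Real.norm_eq_abs, abs_of_nonneg]
    have : (0:ℝ) ≤ u ^ (s - 1) := Real.rpow_nonneg (le_of_lt hu) _
    have := Real.exp_nonneg (-((1 + u) * x))
    rw [hf]
    positivity
  have hIf : Integrable (Function.uncurry f) (μ.prod μ) :=
    (integrable_prod_iff' hmeas).mpr ⟨h1, h2⟩
  have hInt1 : Integrable (fun u => ∫ x, f u x ∂μ) μ := hIf.integral_prod_left
  have hcongr : ∀ u : ℝ, 0 < u → ∫ x, f u x ∂μ = u ^ (s - 1) / (1 + u) := by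
    intro u hu
    have h1u : (0:ℝ) < 1 + u := by linarith
    have : ∫ x, f u x ∂μ = u ^ (s - 1) * ∫ x in Ioi (0:ℝ), Real.exp (-((1 + u) * x)) := by
      rw [hμ, ← integral_const_mul]
    rw [this, expInt h1u]
    ring
  constructor
  · refine hInt1.congr ?_
    filter_upwards [hae] with u hu
    exact hcongr u hu
  · have e1 : ∫ u in Ioi (0:ℝ), u ^ (s - 1) / (1 + u) = ∫ u, (∫ x, f u x ∂μ) ∂μ := by
      refine (integral_congr_ae ?_).symm
      filter_upwards [hae] with u hu
      exact hcongr u hu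
    rw [e1, integral_integral_swap hIf]
    have e2 : ∫ x, (∫ u, f u x ∂μ) ∂μ
        = ∫ x in Ioi (0:ℝ), Real.Gamma s * (x ^ ((1 - s) - 1) * Real.exp (-(1 * x))) := by
      refine integral_congr_ae ?_
      filter_upwards [hae] with x hx
      exact hsliceval x hx
    rw [e2, integral_const_mul, gammaScaledInt (by linarith : (0:ℝ) < 1 - s) one_pos]
    simp [Real.one_rpow]


lemma mellinAux {α : ℝ} (h0 : 0 < α) (h2 : α < 2)
    (hb : IntegrableOn (fun u : ℝ => u ^ (α / 2 - 1) / (1 + u)) (Ioi 0) volume ∧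
      ∫ u in Ioi (0:ℝ), u ^ (α / 2 - 1) / (1 + u)
        = Real.Gamma (α / 2) * Real.Gamma (1 - α / 2)) :
    IntegrableOn (fun t : ℝ => t ^ (α - 1) / (1 + t ^ 2)) (Ioi 0) volume ∧
    ∫ t in Ioi (0:ℝ), t ^ (α - 1) / (1 + t ^ 2)
      = Real.Gamma (α / 2) * Real.Gamma (1 - α / 2) / 2 := by
  set f : ℝ → ℝ := fun u => u ^ (α / 2 - 1) / (1 + u) with hfdef
  have key : ∀ x : ℝ, x ∈ Ioi (0:ℝ) →
      (|(2:ℝ)| * x ^ ((2:ℝ) - 1)) • f (x ^ (2:ℝ)) = 2 * (x ^ (α - 1) / (1 + x ^ 2)) := by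
    intro x hx
    have hx0 : (0:ℝ) < x := hx
    have e1 : x ^ ((2:ℝ)) = x ^ 2 := by
      rw [show ((2:ℝ)) = ((2:ℕ):ℝ) by norm_num, Real.rpow_natCast]
    have e2 : (x ^ (2:ℝ)) ^ (α / 2 - 1) = x ^ (α - 2) := by
      rw [← Real.rpow_mul hx0.le]
      norm_num
      ring_nf
    have e3 : x ^ ((2:ℝ) - 1) = x := by norm_num
    rw [smul_eq_mul, hfdef]
    simp only
    rw [e2, e1, e3]
    have e4 : x ^ (α - 1) = x * x ^ (α - 2) := by
      rw [show α - 1 = 1 + (α - 2) by ring, Real.rpow_add hx0, Real.rpow_one]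
    rw [e4, abs_two]
    ring
  constructor
  · have h1 : IntegrableOn (fun x : ℝ => (|(2:ℝ)| * x ^ ((2:ℝ) - 1)) • f (x ^ (2:ℝ)))
        (Ioi 0) volume := (integrableOn_Ioi_comp_rpow_iff f two_ne_zero).mpr hb.1
    have h2' : IntegrableOn (fun x : ℝ => 2 * (x ^ (α - 1) / (1 + x ^ 2))) (Ioi 0) volume :=
      h1.congr_fun key measurableSet_Ioi
    have h3 : IntegrableOn (fun x : ℝ => (1/2 : ℝ) * (2 * (x ^ (α - 1) / (1 + x ^ 2))))
        (Ioi 0) volume := h2'.const_mul _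
    refine h3.congr_fun (fun x _ => ?_) measurableSet_Ioi
    ring
  · have h1 : ∫ x in Ioi (0:ℝ), (|(2:ℝ)| * x ^ ((2:ℝ) - 1)) • f (x ^ (2:ℝ))
        = ∫ y in Ioi (0:ℝ), f y := integral_comp_rpow_Ioi f two_ne_zero
    rw [setIntegral_congr_fun measurableSet_Ioi key] at h1
    rw [integral_const_mul] at h1
    rw [hb.2] at h1
    linarith


lemma mainAux {α : ℝ} (h0 : 0 < α) (h2 : α < 2) :
    IntegrableOn (fun ξ : ℝ => (1 - Real.cos ξ) * ξ ^ (-(1 + α))) (Ioi 0) volume ∧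
    Real.Gamma (1 + α) * ∫ ξ in Ioi (0:ℝ), (1 - Real.cos ξ) * ξ ^ (-(1 + α))
      = Real.Gamma (α / 2) * Real.Gamma (1 - α / 2) / 2 := by
  have hs0 : 0 < α / 2 := by linarith
  have hs1 : α / 2 < 1 := by linarith
  have hbeta := betaAux hs0 hs1
  have hm := mellinAux h0 h2 hbeta
  have hΓpos : 0 < Real.Gamma (1 + α) := Real.Gamma_pos_of_pos (by linarith)
  set μ := volume.restrict (Ioi (0:ℝ)) with hμ
  set F : ℝ → ℝ → ℝ :=
    fun ξ t => (1 - Real.cos ξ) * (t ^ ((1 + α) - 1) * Real.exp (-(ξ * t))) with hF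
  have hae : ∀ᵐ x ∂μ, 0 < x := self_mem_ae_restrict measurableSet_Ioi
  have hmeas : AEStronglyMeasurable (Function.uncurry F) (μ.prod μ) := by
    apply Measurable.aestronglyMeasurable
    fun_prop
  -- slices in ξ for fixed t > 0
  have hslice : ∀ t : ℝ, 0 < t → IntegrableOn (fun ξ => F ξ t) (Ioi 0) volume := by
    intro t ht
    have h1 : IntegrableOn
        (fun ξ : ℝ => t ^ ((1 + α) - 1) * ((1 - Real.cos ξ) * Real.exp (-(t * ξ))))
        (Ioi 0) volume := (lapAux ht).1.const_mul _
    refine h1.congr_fun (fun ξ _ => ?_) measurableSet_Ioi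
    rw [hF]
    simp only
    rw [mul_comm ξ t]
    ring
  have hsliceval : ∀ t : ℝ, 0 < t →
      ∫ ξ, F ξ t ∂μ = t ^ (α - 1) / (1 + t ^ 2) := by
    intro t ht
    have h1 : ∫ ξ, F ξ t ∂μ
        = t ^ ((1 + α) - 1) * ∫ ξ in Ioi (0:ℝ), (1 - Real.cos ξ) * Real.exp (-(t * ξ)) := by
      rw [hμ, ← integral_const_mul]
      refine setIntegral_congr_fun measurableSet_Ioi (fun ξ _ => ?_)
      rw [hF]; simp only
      rw [mul_comm ξ t]; ring
    rw [h1, (lapAux ht).2]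
    have e1 : t ^ ((1 + α) - 1) = t * t ^ (α - 1) := by
      rw [show (1 + α) - 1 = 1 + (α - 1) by ring, Real.rpow_add ht, Real.rpow_one]
    rw [e1]
    have h1t : (0:ℝ) < 1 + t ^ 2 := by positivity
    field_simp
  -- product integrability
  have h1 : ∀ᵐ t ∂μ, Integrable (fun ξ => F ξ t) μ := by
    filter_upwards [hae] with t ht; exact hslice t ht
  have h2' : Integrable (fun t => ∫ ξ, ‖F ξ t‖ ∂μ) μ := by
    refine hm.1.congr ?_
    filter_upwards [hae] with t ht
    rw [← hsliceval t ht]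
    refine (integral_congr_ae ?_).symm
    filter_upwards [hae] with ξ hξ
    rw [Real.norm_eq_abs, abs_of_nonneg]
    rw [hF]
    have h3 := Real.cos_le_one ξ
    have h4 : (0:ℝ) ≤ t ^ ((1 + α) - 1) := Real.rpow_nonneg ht.le _
    have h5 := Real.exp_nonneg (-(ξ * t))
    exact mul_nonneg (by linarith) (mul_nonneg h4 h5)
  have hIF : Integrable (Function.uncurry F) (μ.prod μ) :=
    (integrable_prod_iff' hmeas).mpr ⟨h1, h2'⟩
  have hInt1 : Integrable (fun ξ => ∫ t, F ξ t ∂μ) μ := hIF.integral_prod_left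
  -- inner integral in t for ξ > 0
  have hinner : ∀ ξ : ℝ, 0 < ξ →
      ∫ t, F ξ t ∂μ = Real.Gamma (1 + α) * ((1 - Real.cos ξ) * ξ ^ (-(1 + α))) := by
    intro ξ hξ
    have h1 : ∫ t, F ξ t ∂μ
        = (1 - Real.cos ξ) * ∫ t in Ioi (0:ℝ), t ^ ((1 + α) - 1) * Real.exp (-(ξ * t)) := by
      rw [hμ, ← integral_const_mul]
    rw [h1, gammaScaledInt (by linarith : (0:ℝ) < 1 + α) hξ]
    rw [one_div, Real.inv_rpow hξ.le, ← Real.rpow_neg hξ.le]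
    ring
  constructor
  · have h3 : Integrable
        (fun ξ : ℝ => (Real.Gamma (1 + α))⁻¹ * ∫ t, F ξ t ∂μ) μ := hInt1.const_mul _
    refine h3.congr ?_
    filter_upwards [hae] with ξ hξ
    rw [hinner ξ hξ, ← mul_assoc, inv_mul_cancel₀ hΓpos.ne', one_mul]
  · have e1 : ∫ ξ, (∫ t, F ξ t ∂μ) ∂μ
        = Real.Gamma (1 + α) * ∫ ξ in Ioi (0:ℝ), (1 - Real.cos ξ) * ξ ^ (-(1 + α)) := by
      rw [hμ, ← integral_const_mul]
      refine integral_congr_ae ?_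
      filter_upwards [hae] with ξ hξ
      exact hinner ξ hξ
    have e2 : ∫ t, (∫ ξ, F ξ t ∂μ) ∂μ = ∫ t in Ioi (0:ℝ), t ^ (α - 1) / (1 + t ^ 2) := by
      refine integral_congr_ae ?_
      filter_upwards [hae] with t ht
      exact hsliceval t ht
    rw [← e1, integral_integral_swap hIF, e2, hm.2]

/-- The one-dimensional normalization constant
`c_{1,α} = 2^{α−1} α Γ((1+α)/2) / (√π Γ(1 − α/2))` of the fractional Laplacian. -/
noncomputable def fracLapConst (α : ℝ) : ℝ :=
  2 ^ (α - 1) * α * Real.Gamma ((1 + α) / 2) / (Real.sqrt Real.pi * Real.Gamma (1 - α / 2))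




lemma constAux {α : ℝ} (h0 : 0 < α) (h2 : α < 2) :
    fracLapConst α *
      (2 * (Real.Gamma (α / 2) * Real.Gamma (1 - α / 2) / 2 / Real.Gamma (1 + α))) = 1 := by
  have hdup := Real.Gamma_mul_Gamma_add_half (α / 2)
  rw [show α / 2 + 1 / 2 = (1 + α) / 2 by ring, show 2 * (α / 2) = α by ring] at hdup
  have hΓα : 0 < Real.Gamma α := Real.Gamma_pos_of_pos h0
  have hΓ1 : 0 < Real.Gamma (1 - α / 2) := Real.Gamma_pos_of_pos (by linarith)
  have hΓh : 0 < Real.Gamma ((1 + α) / 2) := Real.Gamma_pos_of_pos (by linarith)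
  have hΓq : 0 < Real.Gamma (α / 2) := Real.Gamma_pos_of_pos (by linarith)
  have hsπ : 0 < Real.sqrt Real.pi := Real.sqrt_pos.mpr Real.pi_pos
  have hx : (0:ℝ) < (2:ℝ) ^ (α - 1) := Real.rpow_pos_of_pos two_pos _
  have hy : (0:ℝ) < (2:ℝ) ^ (1 - α) := Real.rpow_pos_of_pos two_pos _
  have hadd : Real.Gamma (1 + α) = α * Real.Gamma α := by
    rw [add_comm, Real.Gamma_add_one h0.ne']
  have hpow : (2:ℝ) ^ (α - 1) * (2:ℝ) ^ (1 - α) = 1 := by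
    rw [← Real.rpow_add two_pos]; norm_num
  have hΓhalf : Real.Gamma ((1 + α) / 2)
      = Real.Gamma α * 2 ^ (1 - α) * Real.sqrt Real.pi / Real.Gamma (α / 2) := by
    field_simp
    linarith [hdup]
  have hΓ1' : Real.Gamma ((2 - α) / 2) ≠ 0 := by
    rw [show (2 - α) / 2 = 1 - α / 2 by ring]; exact hΓ1.ne'
  rw [fracLapConst, hadd, hΓhalf]
  field_simp
  linear_combination hpow


lemma scaleAux {α : ℝ} (h0 : 0 < α)
    (hbase : IntegrableOn (fun y : ℝ => (1 - Real.cos y) * y ^ (-(1 + α))) (Ioi 0) volume)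
    {c : ℝ} (hc : 0 < c) :
    IntegrableOn (fun ξ : ℝ => (1 - Real.cos (c * ξ)) * ξ ^ (-(1 + α))) (Ioi 0) volume ∧
    ∫ ξ in Ioi (0:ℝ), (1 - Real.cos (c * ξ)) * ξ ^ (-(1 + α))
      = c ^ α * ∫ y in Ioi (0:ℝ), (1 - Real.cos y) * y ^ (-(1 + α)) := by
  set g : ℝ → ℝ := fun y => (1 - Real.cos y) * y ^ (-(1 + α)) with hg
  have hcc : c ^ (1 + α) * c ^ (-(1 + α)) = 1 := by
    rw [← Real.rpow_add hc, show (1 + α) + -(1 + α) = 0 by ring, Real.rpow_zero]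
  have key : ∀ ξ : ℝ, ξ ∈ Ioi (0:ℝ) →
      (1 - Real.cos (c * ξ)) * ξ ^ (-(1 + α)) = c ^ (1 + α) * g (c * ξ) := by
    intro ξ hξ
    rw [hg]
    simp only
    rw [Real.mul_rpow hc.le (le_of_lt hξ)]
    linear_combination (-(1 - Real.cos (c * ξ)) * ξ ^ (-(1 + α))) * hcc
  have hcomp : IntegrableOn (fun ξ : ℝ => g (c * ξ)) (Ioi 0) volume := by
    have h1 : IntegrableOn g (Ioi (c * 0)) volume := by rw [mul_zero]; exact hbase
    exact (integrableOn_Ioi_comp_mul_left_iff g 0 hc).mpr h1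
  constructor
  · have h1 : IntegrableOn (fun ξ : ℝ => c ^ (1 + α) * g (c * ξ)) (Ioi 0) volume :=
      hcomp.const_mul _
    exact h1.congr_fun (fun ξ hξ => (key ξ hξ).symm) measurableSet_Ioi
  · rw [setIntegral_congr_fun measurableSet_Ioi key, integral_const_mul,
      integral_comp_mul_left_Ioi g 0 hc, mul_zero, smul_eq_mul, ← mul_assoc]
    congr 1
    rw [← Real.rpow_neg_one c, ← Real.rpow_add hc]
    congr 1
    ring

/-- For `α ∈ (0,2)` and every `k ∈ ℝ`, the function `ξ ↦ (2 − 2cos(kξ)) ξ^{−(1+α)}` is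
integrable on `(0,∞)` and `c_{1,α} ∫_0^∞ (2 − 2cos(kξ)) ξ^{−(1+α)} dξ = |k|^α`:
the hypersingular-integral and pseudo-differential definitions of `(−Δ)^{α/2}` agree. -/
theorem stmt17 (α : ℝ) (hα : α ∈ Set.Ioo (0:ℝ) 2) :
    ∀ k : ℝ,
      IntegrableOn (fun ξ : ℝ => (2 - 2 * Real.cos (k * ξ)) * ξ ^ (-(1 + α)))
        (Set.Ioi 0) volume ∧
      fracLapConst α * (∫ ξ in Set.Ioi (0:ℝ), (2 - 2 * Real.cos (k * ξ)) * ξ ^ (-(1 + α))) =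
        |k| ^ α := by
  obtain ⟨h0, h2⟩ := hα
  intro k
  have hmain := mainAux h0 h2
  have hΓpos : 0 < Real.Gamma (1 + α) := Real.Gamma_pos_of_pos (by linarith)
  have hJ : ∫ ξ in Ioi (0:ℝ), (1 - Real.cos ξ) * ξ ^ (-(1 + α))
      = Real.Gamma (α / 2) * Real.Gamma (1 - α / 2) / 2 / Real.Gamma (1 + α) := by
    rw [eq_div_iff hΓpos.ne', mul_comm]
    exact hmain.2
  by_cases hk : k = 0
  · subst hk
    have hzero : ∀ ξ : ℝ, (2 - 2 * Real.cos (0 * ξ)) * ξ ^ (-(1 + α)) = 0 := by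
      intro ξ; simp
    have hfun : (fun ξ : ℝ => (2 - 2 * Real.cos (0 * ξ)) * ξ ^ (-(1 + α)))
        = fun _ : ℝ => (0:ℝ) := funext hzero
    constructor
    · rw [hfun]; exact integrableOn_zero
    · rw [hfun]
      simp [Real.zero_rpow h0.ne']
  · have hc : 0 < |k| := abs_pos.mpr hk
    have hs := scaleAux h0 hmain.1 hc
    have hcos : ∀ ξ : ℝ, ξ ∈ Ioi (0:ℝ) → Real.cos (k * ξ) = Real.cos (|k| * ξ) := by
      intro ξ hξ
      calc Real.cos (k * ξ) = Real.cos |k * ξ| := (Real.cos_abs _).symm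
        _ = Real.cos (|k| * ξ) := by rw [abs_mul, abs_of_pos (show (0:ℝ) < ξ from hξ)]
    constructor
    · have h1 : IntegrableOn
          (fun ξ : ℝ => 2 * ((1 - Real.cos (|k| * ξ)) * ξ ^ (-(1 + α)))) (Ioi 0) volume :=
        hs.1.const_mul _
      refine h1.congr_fun (fun ξ hξ => ?_) measurableSet_Ioi
      rw [hcos ξ hξ]; ring
    · have e : ∫ ξ in Ioi (0:ℝ), (2 - 2 * Real.cos (k * ξ)) * ξ ^ (-(1 + α))
          = 2 * ∫ ξ in Ioi (0:ℝ), (1 - Real.cos (|k| * ξ)) * ξ ^ (-(1 + α)) := by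
        rw [← integral_const_mul]
        refine setIntegral_congr_fun measurableSet_Ioi (fun ξ hξ => ?_)
        rw [hcos ξ hξ]; ring
      rw [e, hs.2, hJ]
      linear_combination (|k| ^ α) * constAux h0 h2
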